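/- Let d ≥ 1. The polynomial (1 + z) · Σ_{n=0}^{d−1} Y^{2^n} + z, of degree 2^{d−1} in Y, is irreducible in F₂(z)[Y], where F₂(z) is the field of rational functions over F₂. -/

import Mathlib

open Polynomial

noncomputable section StmtTen

/-- Inner embedding `A[X] →+* A[X][X]` sending `X` to the OUTER variable. -/
def innerHom (A : Type*) [CommSemiring A] : A[X] →+* A[X][X] :=
  eval₂RingHom (C.comp C) X

/-- Swap the two variables of `A[X][X]`. -/
def swapHom (A : Type*) [CommSemiring A] : A[X][X] →+* A[X][X] :=
  eval₂RingHom (innerHom A) (C X)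

variable {A : Type*} [CommSemiring A]

@[simp] lemma innerHom_C (a : A) : innerHom A (C a) = C (C a) := by
  simp [innerHom]

@[simp] lemma innerHom_X : innerHom A (X : A[X]) = X := by
  simp [innerHom]

@[simp] lemma swapHom_CC (a : A) : swapHom A (C (C a)) = C (C a) := by
  simp [swapHom]

@[simp] lemma swapHom_C (q : A[X]) : swapHom A (C q) = innerHom A q := by
  simp [swapHom]

@[simp] lemma swapHom_X : swapHom A (X : A[X][X]) = C X := by
  simp [swapHom]

lemma swapHom_innerHom (q : A[X]) : swapHom A (innerHom A q) = C q := by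
  induction q using Polynomial.induction_on with
  | C a => simp
  | add p q hp hq => simp [map_add, hp, hq]
  | monomial n a h => simp only [map_mul, map_pow] at h ⊢; simp_all [pow_succ, mul_assoc]

lemma swapHom_swapHom (p : A[X][X]) : swapHom A (swapHom A p) = p := by
  induction p using Polynomial.induction_on with
  | C q => simp [swapHom_innerHom]
  | add p q hp hq => simp [map_add, hp, hq]
  | monomial n q h =>
      simp only [map_mul, map_pow] at h ⊢
      simp_all [pow_succ, mul_assoc, swapHom_innerHom]

/-- Swap as a ring equivalence. -/
def swapEquiv (A : Type*) [CommSemiring A] : A[X][X] ≃+* A[X][X] :=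
  RingEquiv.ofRingHom (swapHom A) (swapHom A)
    (RingHom.ext swapHom_swapHom) (RingHom.ext swapHom_swapHom)

/-- The sum `∑ X^{2^n}` is monic of degree `2^(d-1)`. -/
lemma S_monic (F : Type*) [Semiring F] [Nontrivial F] :
    ∀ d : ℕ, 1 ≤ d → (∑ n ∈ Finset.range d, (X : F[X]) ^ 2 ^ n).Monic ∧
      (∑ n ∈ Finset.range d, (X : F[X]) ^ 2 ^ n).degree = (2 ^ (d - 1) : ℕ) := by
  intro d hd
  induction d with
  | zero => omega
  | succ k ih =>
    rcases Nat.lt_or_ge 1 (k + 1) with h | h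
    · have hk : 1 ≤ k := by omega
      obtain ⟨hmon, hdeg⟩ := ih hk
      rw [Finset.sum_range_succ]
      have hlt : (∑ n ∈ Finset.range k, (X : F[X]) ^ 2 ^ n).degree
          < ((X : F[X]) ^ 2 ^ k).degree := by
        rw [hdeg, degree_X_pow]
        exact_mod_cast Nat.pow_lt_pow_right one_lt_two (by omega)
      refine ⟨(monic_X_pow _).add_of_right hlt, ?_⟩
      rw [degree_add_eq_right_of_degree_lt hlt, degree_X_pow]
      simp
    · have hk : k = 0 := by omega
      subst hk
      simp [Finset.sum_range_one, monic_X_pow]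

lemma S_coeff_zero (F : Type*) [Semiring F] (d : ℕ) :
    (∑ n ∈ Finset.range d, (X : F[X]) ^ 2 ^ n).coeff 0 = 0 := by
  rw [finset_sum_coeff]
  refine Finset.sum_eq_zero fun n _ => ?_
  rw [coeff_X_pow, if_neg (Nat.pow_pos (n := n) two_pos).ne]

lemma S_coeff_one (F : Type*) [Semiring F] (d : ℕ) (hd : 1 ≤ d) :
    (∑ n ∈ Finset.range d, (X : F[X]) ^ 2 ^ n).coeff 1 = 1 := by
  rw [finset_sum_coeff]
  rw [Finset.sum_eq_single_of_mem 0 (Finset.mem_range.mpr (by omega))]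
  · simp [coeff_X_pow]
  · intro n _ hn
    rw [coeff_X_pow, if_neg]
    exact fun h => absurd h.symm (Nat.one_lt_two_pow_iff.mpr hn).ne'

end StmtTen

theorem stmt10 (d : ℕ) (hd : 1 ≤ d) :
    (Polynomial.C (1 + (RatFunc.X : RatFunc (ZMod 2))) *
          ∑ n ∈ Finset.range d, Polynomial.X ^ 2 ^ n +
        Polynomial.C (RatFunc.X : RatFunc (ZMod 2))).natDegree = 2 ^ (d - 1) ∧
      Irreducible
        (Polynomial.C (1 + (RatFunc.X : RatFunc (ZMod 2))) *
            ∑ n ∈ Finset.range d, Polynomial.X ^ 2 ^ n +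
          Polynomial.C (RatFunc.X : RatFunc (ZMod 2))) := by
  have hinj : Function.Injective (algebraMap ((ZMod 2)[X]) (RatFunc (ZMod 2))) :=
    IsFractionRing.injective _ _
  set S : (ZMod 2)[X] := ∑ n ∈ Finset.range d, X ^ 2 ^ n with hS
  set p : ((ZMod 2)[X])[X] := C (1 + X) * (∑ n ∈ Finset.range d, X ^ 2 ^ n) + C X with hp
  -- map to the fraction field is the statement's polynomial
  have hmap : p.map (algebraMap ((ZMod 2)[X]) (RatFunc (ZMod 2))) =
      C (1 + (RatFunc.X : RatFunc (ZMod 2))) * ∑ n ∈ Finset.range d, X ^ 2 ^ n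
        + C (RatFunc.X : RatFunc (ZMod 2)) := by
    simp [hp, Polynomial.map_add, Polynomial.map_mul, Polynomial.map_sum,
      Polynomial.map_pow, Polynomial.map_C, Polynomial.map_X, map_add, map_one,
      RatFunc.algebraMap_X]
  -- basic coefficient facts
  have hc0 : p.coeff 0 = X := by
    rw [hp, coeff_add, coeff_C_mul, S_coeff_zero, mul_zero, zero_add, coeff_C_zero]
  have hc1 : p.coeff 1 = 1 + X := by
    rw [hp, coeff_add, coeff_C_mul, S_coeff_one ((ZMod 2)[X]) d hd, mul_one]
    simp [coeff_C]
  -- primitivity of p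
  have hprim : p.IsPrimitive := by
    intro r hr
    have h0 := (C_dvd_iff_dvd_coeff r p).mp hr 0
    have h1 := (C_dvd_iff_dvd_coeff r p).mp hr 1
    rw [hc0] at h0; rw [hc1] at h1
    have : r ∣ 1 := by simpa using h1.sub h0
    exact isUnit_of_dvd_one this
  -- the swapped polynomial
  set q : ((ZMod 2)[X])[X] := C (S + 1) * X + C S with hq
  have hswap : swapHom (ZMod 2) q = p := by
    have hSinner : innerHom (ZMod 2) S = ∑ n ∈ Finset.range d, X ^ 2 ^ n := by
      simp [hS, map_sum, map_pow]
    simp only [hq, hp, map_add, map_mul, swapHom_C, swapHom_X, map_one, hSinner]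
    ring
  -- q is primitive
  have hqprim : q.IsPrimitive := by
    intro r hr
    have h0 := (C_dvd_iff_dvd_coeff r q).mp hr 0
    have h1 := (C_dvd_iff_dvd_coeff r q).mp hr 1
    rw [show q.coeff 0 = S by simp [hq, coeff_C_mul, coeff_C]] at h0
    rw [show q.coeff 1 = S + 1 by simp [hq, coeff_C_mul, coeff_C]] at h1
    have : r ∣ 1 := by simpa using h1.sub h0
    exact isUnit_of_dvd_one this
  -- S + 1 ≠ 0
  have hSone : S + 1 ≠ 0 := by
    have h1 : (S + 1).coeff 0 = 1 := by
      rw [coeff_add, hS, S_coeff_zero, zero_add, coeff_one]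
      simp
    intro h
    rw [h, coeff_zero] at h1
    exact one_ne_zero h1.symm
  -- q maps to an irreducible (degree one) polynomial over the fraction field
  have hqmapirr : Irreducible (q.map (algebraMap ((ZMod 2)[X]) (RatFunc (ZMod 2)))) := by
    apply irreducible_of_degree_eq_one
    rw [hq]
    simp only [Polynomial.map_add, Polynomial.map_mul, Polynomial.map_C, Polynomial.map_X]
    exact degree_linear ((map_ne_zero_iff (algebraMap ((ZMod 2)[X]) (RatFunc (ZMod 2))) hinj).mpr hSone)
  -- hence q is irreducible over F₂[Y]
  have hqirr : Irreducible q :=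
    hqprim.irreducible_iff_irreducible_map_fraction_map.mpr hqmapirr
  -- hence p is irreducible over F₂[z]
  have hpirr : Irreducible p := by
    rw [← hswap]
    exact (MulEquiv.irreducible_iff (swapEquiv (ZMod 2)).toMulEquiv).mpr hqirr
  -- degree computation over the fraction field
  obtain ⟨hmon, hdeg⟩ := S_monic (RatFunc (ZMod 2)) d hd
  have haK : (1 + (RatFunc.X : RatFunc (ZMod 2))) ≠ 0 := by
    have h1X : ((1 : (ZMod 2)[X]) + X) ≠ 0 := by
      intro h
      have := congrArg (fun t => Polynomial.coeff t 0) h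
      simp at this
    have heq : (1 + (RatFunc.X : RatFunc (ZMod 2)))
        = algebraMap ((ZMod 2)[X]) (RatFunc (ZMod 2)) (1 + X) := by
      rw [map_add, map_one, RatFunc.algebraMap_X]
    rw [heq, Ne, map_eq_zero_iff _ hinj]
    exact h1X
  constructor
  · apply natDegree_eq_of_degree_eq_some
    have h1 : (C (1 + (RatFunc.X : RatFunc (ZMod 2))) *
        ∑ n ∈ Finset.range d, (X : (RatFunc (ZMod 2))[X]) ^ 2 ^ n).degree
          = (2 ^ (d - 1) : ℕ) := by
      rw [degree_C_mul haK, hdeg]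
    have h2 : (C (RatFunc.X : RatFunc (ZMod 2)) : (RatFunc (ZMod 2))[X]).degree
        < (C (1 + (RatFunc.X : RatFunc (ZMod 2))) *
            ∑ n ∈ Finset.range d, (X : (RatFunc (ZMod 2))[X]) ^ 2 ^ n).degree := by
      rw [h1]
      refine lt_of_le_of_lt (degree_C_le) ?_
      exact_mod_cast Nat.pow_pos (n := d - 1) two_pos
    rw [degree_add_eq_left_of_degree_lt h2, h1]
  · rw [← hmap]
    exact hprim.irreducible_iff_irreducible_map_fraction_map.mp hpirr
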